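/- Let K/k be a purely inseparable extension of characteristic p > 0 that is relatively perfect (k(K^p) = K). Then for every intermediate field L of K/k, if K/L is a finite extension then L = K. -/

import Mathlib

/-!
Common definitions: purely inseparable extension theory (r-bases, degree of
irrationality, relative perfect closure, modularity), following Fliouet,
"Extensions absolument lq-finies".
-/

open IntermediateField

noncomputable section

/-- `k(K^p)`: the intermediate field of `K/k` generated by the `p`-th powers of `K`. -/
def pClosure (k K : Type*) [Field k] [Field K] [Algebra k K] (p : ℕ) : IntermediateField k K :=
  adjoin k {x : K | ∃ y : K, y ^ p = x}

/-- `k(K^{p^n})`. -/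
def pnClosure (k K : Type*) [Field k] [Field K] [Algebra k K] (p n : ℕ) : IntermediateField k K :=
  adjoin k {x : K | ∃ y : K, y ^ p ^ n = x}

/-- `k(L^p)` for an intermediate field `L` of `Ω/k`. -/
def pClosureOf {k Ω : Type*} [Field k] [Field Ω] [Algebra k Ω] (p : ℕ)
    (L : IntermediateField k Ω) : IntermediateField k Ω :=
  adjoin k {x : Ω | ∃ y ∈ L, y ^ p = x}

/-- `B` is `r`-free over the intermediate field `L` (typically `L = k(K^p)`):
no `x ∈ B` belongs to `L(B \ {x})`. -/
def RFreeOver {k K : Type*} [Field k] [Field K] [Algebra k K]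
    (L : IntermediateField k K) (B : Set K) : Prop :=
  ∀ x ∈ B, x ∉ adjoin L (B \ {x})

/-- `B` is an `r`-basis of `K/k` : `K = k(K^p)(B)` and `B` is `r`-free over `k(K^p)`. -/
def RBasis (k K : Type*) [Field k] [Field K] [Algebra k K] (p : ℕ) (B : Set K) : Prop :=
  adjoin (pClosure k K p) B = ⊤ ∧ RFreeOver (pClosure k K p) B

/-- `B` is an `r`-basis of `L/F` where `F ≤ L` are intermediate fields of `Ω/k`:
`L = F(L^p)(B)` and no `x ∈ B` lies in `F(L^p)(B \ {x})`. -/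
def RBasisRel {k Ω : Type*} [Field k] [Field Ω] [Algebra k Ω] (p : ℕ)
    (F L : IntermediateField k Ω) (B : Set Ω) : Prop :=
  B ⊆ (L : Set Ω) ∧ F ⊔ pClosureOf p L ⊔ adjoin k B = L ∧
    ∀ x ∈ B, x ∉ F ⊔ pClosureOf p L ⊔ adjoin k (B \ {x})

/-- The degree of irrationality of a bounded-exponent extension:
the cardinality of an `r`-basis of `K/k`. -/
def diCard (k K : Type*) [Field k] [Field K] [Algebra k K] (p : ℕ) : Cardinal :=
  sInf {c : Cardinal | ∃ B : Set K, RBasis k K p B ∧ Cardinal.mk B = c}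

/-- `k^{p^{-n}} ∩ K = {x ∈ K | x^{p^n} ∈ k}`. -/
def expleq (k K : Type*) [Field k] [Field K] [Algebra k K] (p n : ℕ) : IntermediateField k K :=
  adjoin k {x : K | x ^ p ^ n ∈ (algebraMap k K).range}

/-- The degree of irrationality `di(K/k) = sup_n di(k^{p^{-n}} ∩ K / k)`. -/
def di (k K : Type*) [Field k] [Field K] [Algebra k K] (p : ℕ) : Cardinal :=
  ⨆ n : ℕ, diCard k (expleq k K p n) p

/-- The relative perfect closure `rp(K/k)`: the largest intermediate field `L`
with `k(L^p) = L`. -/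
def rp (k K : Type*) [Field k] [Field K] [Algebra k K] (p : ℕ) : IntermediateField k K :=
  sSup {L : IntermediateField k K | pClosureOf p L = L}

/-- `K/k` has unbounded exponent. -/
def UnboundedExp (k K : Type*) [Field k] [Field K] [Algebra k K] (p : ℕ) : Prop :=
  ∀ e : ℕ, ∃ x : K, x ^ p ^ e ∉ (algebraMap k K).range

/-- `K^{p^n}` as a subfield of `K`. -/
def pnPowers (K : Type*) [Field K] (p n : ℕ) : Subfield K :=
  Subfield.closure {x : K | ∃ y : K, y ^ p ^ n = x}

/-- `K/k` is modular: for each `n`, `K^{p^n}` and `k` are linearly disjoint over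
`K^{p^n} ∩ k`, i.e. every finite family of elements of `K^{p^n}` that is linearly
independent over `K^{p^n} ∩ k` remains linearly independent over `k`. -/
def Modular (k K : Type*) [Field k] [Field K] [Algebra k K] (p : ℕ) : Prop :=
  ∀ n : ℕ, ∀ s : Finset K, (↑s : Set K) ⊆ (pnPowers K p n : Set K) →
    LinearIndependent ↥(pnPowers K p n ⊓ (algebraMap k K).fieldRange)
      (fun x : s => (x : K)) →
    LinearIndependent ↥((algebraMap k K).fieldRange) (fun x : s => (x : K))

/-- The exponent `o(a, F)` of `a` over an intermediate field `F`:
the least `m` with `a^{p^m} ∈ F`. -/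
def expOf {k K : Type*} [Field k] [Field K] [Algebra k K] (p : ℕ)
    (F : IntermediateField k K) (a : K) : ℕ :=
  sInf {m : ℕ | a ^ p ^ m ∈ F}

/-- An intermediate field `L` of `K/k` is equiexponential of exponent `e` over `k`:
there is an `r`-basis `G` of `L/k` with `o(a, k(G \ {a})) = o(a, k) = e` for all `a ∈ G`. -/
def EquiExpOf {k K : Type*} [Field k] [Field K] [Algebra k K] (p : ℕ)
    (e : ℕ) (L : IntermediateField k K) : Prop :=
  ∃ G : Set K, RBasisRel p ⊥ L G ∧
    ∀ a ∈ G, expOf p (adjoin k (G \ {a})) a = e ∧ expOf p (⊥ : IntermediateField k K) a = e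

end

set_option maxHeartbeats 1000000 in
/-- If `K/k` is purely inseparable and relatively perfect
(`k(K^p) = K`), then any intermediate field `L` with `K/L` finite equals `K`. -/
theorem eq_top_of_finiteDimensional_of_relativelyPerfect
    (p : ℕ) [Fact p.Prime] (k K : Type*) [Field k] [Field K] [Algebra k K] [CharP k p]
    [IsPurelyInseparable k K]
    (hrp : pClosure k K p = ⊤)
    (L : IntermediateField k K) (hfin : FiniteDimensional ↥L K) :
    L = ⊤ := by
  haveI : CharP K p := charP_of_injective_algebraMap (algebraMap k K).injective p
  haveI : ExpChar K p := .prime Fact.out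
  haveI : CharP ↥L p := charP_of_injective_algebraMap (algebraMap k ↥L).injective p
  haveI : ExpChar ↥L p := .prime Fact.out
  set n := Module.finrank ↥L K with hn
  let b : Module.Basis (Fin n) ↥L K := Module.finBasis ↥L K
  have hpow : ∀ (v : Fin n → K), ⊤ ≤ Submodule.span ↥L (Set.range v) →
      ∀ x : K, x ^ p ∈ Submodule.span ↥L (Set.range fun i => v i ^ p) := by
    intro v hv x
    obtain ⟨c, hc⟩ := (Submodule.mem_span_range_iff_exists_fun ↥L).mp (hv (Submodule.mem_top : x ∈ ⊤))
    have hx : x ^ p = ∑ i, (c i ^ p) • (v i ^ p) := by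
      rw [← hc, sum_pow_char]
      refine Finset.sum_congr rfl fun i _ => ?_
      rw [Algebra.smul_def, Algebra.smul_def, mul_pow, map_pow]
    rw [hx]
    exact Submodule.sum_mem _ fun i _ =>
      Submodule.smul_mem _ _ (Submodule.subset_span ⟨i, rfl⟩)
  have key : ∀ (v : Fin n → K), ⊤ ≤ Submodule.span ↥L (Set.range v) →
      ⊤ ≤ Submodule.span ↥L (Set.range fun i => v i ^ p) := by
    intro v hv
    set S := Submodule.span ↥L (Set.range fun i => v i ^ p) with hS
    have h1 : (1 : K) ∈ S := by simpa using hpow v hv 1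
    have hmulle : S * S ≤ S := by
      rw [hS, Submodule.span_mul_span]
      refine Submodule.span_le.mpr ?_
      rintro _ ⟨_, ⟨i, rfl⟩, _, ⟨j, rfl⟩, rfl⟩
      show v i ^ p * v j ^ p ∈ _
      rw [← mul_pow]
      exact hpow v hv _
    let SA : Subalgebra ↥L K :=
      S.toSubalgebra h1 (fun x y hx hy => hmulle (Submodule.mul_mem_mul hx hy))
    have hinv : ∀ x ∈ SA, x⁻¹ ∈ SA := fun x hx =>
      SA.inv_mem_of_algebraic
        ((Algebra.IsAlgebraic.of_finite ↥L K).isAlgebraic ((⟨x, hx⟩ : SA) : K))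
    have hT : pClosure k K p ≤
        ((SA.restrictScalars k).toIntermediateField fun x hx => hinv x hx) := by
      refine IntermediateField.adjoin_le_iff.mpr ?_
      rintro y ⟨z, rfl⟩
      exact hpow v hv z
    intro x _
    exact hT (hrp.symm ▸ IntermediateField.mem_top)
  have hsp : ∀ m : ℕ, ⊤ ≤ Submodule.span ↥L (Set.range fun i => b i ^ p ^ m) := by
    intro m
    induction m with
    | zero => simpa using b.span_eq.ge
    | succ m ih =>
      have h := key _ ih
      simp only [← pow_mul, ← pow_succ] at h
      exact h
  have hexp : ∀ i : Fin n, ∃ m : ℕ, (b i : K) ^ p ^ m ∈ L := by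
    intro i
    obtain ⟨m, y, hy⟩ := IsPurelyInseparable.pow_mem ↥L p (b i)
    exact ⟨m, hy ▸ y.2⟩
  choose f hf using hexp
  set N := Finset.univ.sup f with hNdef
  have hN : ∀ i : Fin n, (b i : K) ^ p ^ N ∈ L := by
    intro i
    have hle : f i ≤ N := Finset.le_sup (Finset.mem_univ i)
    have : (b i : K) ^ p ^ N = ((b i : K) ^ p ^ f i) ^ p ^ (N - f i) := by
      rw [← pow_mul, ← pow_add, Nat.add_sub_cancel' hle]
    rw [this]
    exact pow_mem (hf i) _
  refine eq_top_iff.mpr fun x _ => ?_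
  obtain ⟨c, hc⟩ := (Submodule.mem_span_range_iff_exists_fun ↥L).mp (hsp N (Submodule.mem_top : x ∈ ⊤))
  rw [← hc]
  refine sum_mem fun i _ => ?_
  rw [Algebra.smul_def]
  exact mul_mem (c i).2 (hN i)
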